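/- The limit as x tends to π/2 from the left of ((tan x)·(π² − 4x²)/x − 8)/(π/2 − x) equals 8/π. -/

import Mathlib

open Real Filter Topology

private lemma sin_div_lim : Tendsto (fun u : ℝ => Real.sin u / u) (𝓝[≠] (0:ℝ)) (𝓝 1) := by
  have h := (Real.hasDerivAt_sin 0)
  rw [hasDerivAt_iff_tendsto_slope] at h
  simpa [slope_fun_def, div_eq_inv_mul, Real.cos_zero] using h

private lemma cos_sub_one_lim : Tendsto (fun u : ℝ => (Real.cos u - 1) / u) (𝓝[≠] (0:ℝ)) (𝓝 0) := by
  have h := (Real.hasDerivAt_cos 0)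
  rw [hasDerivAt_iff_tendsto_slope] at h
  simpa [slope_fun_def, div_eq_inv_mul, Real.sin_zero, Real.cos_zero] using h

private lemma sub_sin_lim : Tendsto (fun u : ℝ => (u - Real.sin u) / u ^ 2) (𝓝[>] (0:ℝ)) (𝓝 0) := by
  have h1 : Tendsto (fun u : ℝ => u / 4) (𝓝[>] (0:ℝ)) (𝓝 0) := by
    have : Tendsto (fun u : ℝ => u / 4) (𝓝 (0:ℝ)) (𝓝 (0/4)) :=
      (continuous_id.div_const 4).tendsto 0
    simpa using this.mono_left nhdsWithin_le_nhds
  refine squeeze_zero' ?_ ?_ h1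
  · filter_upwards [self_mem_nhdsWithin] with u hu
    have hu : (0:ℝ) < u := hu
    have := Real.sin_lt hu
    apply div_nonneg (by linarith) (by positivity)
  · filter_upwards [self_mem_nhdsWithin, Ioo_mem_nhdsGT (by norm_num : (0:ℝ) < 1)]
      with u hu hu1
    have hu : (0:ℝ) < u := hu
    have h2 := Real.sin_gt_sub_cube hu
    have : u - Real.sin u ≤ u ^ 3 / 4 := by nlinarith [pow_pos hu 3]
    calc (u - Real.sin u) / u ^ 2 ≤ (u ^ 3 / 4) / u ^ 2 := by
          apply div_le_div_of_nonneg_right this (by positivity) |>.trans_eq rfl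
      _ = u / 4 := by field_simp

private lemma key_lim : Tendsto (fun u : ℝ => (u * Real.cos u - Real.sin u) / (u * Real.sin u))
    (𝓝[>] (0:ℝ)) (𝓝 0) := by
  have hsub : (𝓝[>] (0:ℝ)) ≤ 𝓝[≠] 0 :=
    nhdsWithin_mono _ (fun x hx => ne_of_gt hx)
  have hA : Tendsto (fun u : ℝ => (Real.cos u - 1) / u + (u - Real.sin u) / u ^ 2)
      (𝓝[>] (0:ℝ)) (𝓝 0) := by
    simpa using (cos_sub_one_lim.mono_left hsub).add sub_sin_lim
  have hB : Tendsto (fun u : ℝ => u / Real.sin u) (𝓝[>] (0:ℝ)) (𝓝 1) := by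
    have := (sin_div_lim.mono_left hsub).inv₀ one_ne_zero
    simpa [inv_div] using this
  have := hA.mul hB
  rw [zero_mul] at this
  refine this.congr' ?_
  filter_upwards [Ioo_mem_nhdsGT (by norm_num [Real.pi_pos] : (0:ℝ) < π)]
    with u hu
  have hu0 : u ≠ 0 := ne_of_gt hu.1
  have hs : Real.sin u ≠ 0 := ne_of_gt (Real.sin_pos_of_pos_of_lt_pi hu.1 hu.2)
  field_simp
  ring

private lemma neg_map : Tendsto (fun x : ℝ => π / 2 - x) (𝓝[<] (π / 2)) (𝓝[>] (0:ℝ)) := by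
  apply tendsto_nhdsWithin_of_tendsto_nhds_of_eventually_within
  · have : Tendsto (fun x : ℝ => π / 2 - x) (𝓝 (π / 2)) (𝓝 (π / 2 - π / 2)) :=
      (continuous_const.sub continuous_id).tendsto _
    simpa using this.mono_left nhdsWithin_le_nhds
  · filter_upwards [self_mem_nhdsWithin] with x hx
    simp only [Set.mem_Iio] at hx
    simp only [Set.mem_Ioi]
    linarith

theorem stmt16 :
    Tendsto (fun x : ℝ => (Real.tan x * (π ^ 2 - 4 * x ^ 2) / x - 8) / (π / 2 - x))
      (𝓝[<] (π / 2)) (𝓝 (8 / π)) := by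
  have hpi := Real.pi_pos
  -- limit of first term
  have T1 : Tendsto (fun x : ℝ => ((π - 2 * x) * Real.tan x - 2) / (π / 2 - x))
      (𝓝[<] (π / 2)) (𝓝 0) := by
    have hcomp := (key_lim.comp neg_map).const_mul (2:ℝ)
    rw [mul_zero] at hcomp
    refine hcomp.congr' ?_
    filter_upwards [Ioo_mem_nhdsLT
        (by linarith : (0:ℝ) < π/2)] with x hx
    have hx1 : 0 < x := hx.1
    have hx2 : x < π / 2 := hx.2
    obtain ⟨u, hu⟩ : ∃ u : ℝ, u = π / 2 - x := ⟨_, rfl⟩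
    have hu0 : 0 < u := by rw [hu]; linarith
    have hupi : u < π := by rw [hu]; linarith
    have hsu : Real.sin u ≠ 0 := ne_of_gt (Real.sin_pos_of_pos_of_lt_pi hu0 hupi)
    have hcx : Real.cos x = Real.sin u := by rw [hu, Real.sin_pi_div_two_sub]
    have hsx : Real.sin x = Real.cos u := by rw [hu, Real.cos_pi_div_two_sub]
    have hcx0 : Real.cos x ≠ 0 := by rw [hcx]; exact hsu
    have h2x : π - 2 * x = 2 * u := by rw [hu]; ring
    simp only [Function.comp_apply, Real.tan_eq_sin_div_cos, hcx, hsx, h2x, ← hu]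
    have hu0' : u ≠ 0 := ne_of_gt hu0
    field_simp
  have hx0 : ∀ᶠ x in 𝓝[<] (π/2), x ∈ Set.Ioo 0 (π/2) :=
    Ioo_mem_nhdsLT (by linarith)
  -- limit of (π + 2x)/x
  have T2 : Tendsto (fun x : ℝ => (π + 2 * x) / x) (𝓝[<] (π / 2)) (𝓝 4) := by
    have : Tendsto (fun x : ℝ => (π + 2 * x) / x) (𝓝 (π / 2)) (𝓝 ((π + 2 * (π/2)) / (π/2))) := by
      apply Tendsto.div
      · exact (continuous_const.add (continuous_const.mul continuous_id)).tendsto _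
      · exact continuous_id.tendsto _
      · positivity
    have heq : (π + 2 * (π/2)) / (π/2) = 4 := by field_simp; ring
    rw [heq] at this
    exact this.mono_left nhdsWithin_le_nhds
  have T3 : Tendsto (fun x : ℝ => 4 / x) (𝓝[<] (π / 2)) (𝓝 (8 / π)) := by
    have : Tendsto (fun x : ℝ => 4 / x) (𝓝 (π / 2)) (𝓝 (4 / (π/2))) :=
      Tendsto.div tendsto_const_nhds (continuous_id.tendsto _) (by positivity)
    have heq : (4:ℝ) / (π/2) = 8 / π := by field_simp; ring
    rw [heq] at this
    exact this.mono_left nhdsWithin_le_nhds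
  have := (T1.mul T2).add T3
  rw [zero_mul, zero_add] at this
  refine this.congr' ?_
  filter_upwards [hx0] with x hx
  have hx1 : (0:ℝ) < x := hx.1
  have hx2 : x < π / 2 := hx.2
  have hx0' : x ≠ 0 := ne_of_gt hx1
  have hu0 : π / 2 - x ≠ 0 := by intro h; linarith [(by linarith : (0:ℝ) < π/2 - x)]
  have key : Real.tan x * (π ^ 2 - 4 * x ^ 2) = ((π - 2*x) * Real.tan x) * (π + 2*x) := by ring
  have hd : π * x - x ^ 2 * 2 ≠ 0 := by nlinarith
  rw [key]
  field_simp [hx0', hu0, hd]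
  linear_combination (-4 : ℝ) * mul_inv_cancel₀ (by linarith : (0:ℝ) < π - x * 2).ne'
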